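/- Consider the block matrix A = [[α, xᵀ, wᵀ],[y, B, O],[z, Oᵀ, C]] where B and C are square matrices, O denotes a zero block, and α is a scalar. If xᵀ is not in the row space of B and y is not in the column space of B, then rank(A) = rank(B) + rank(C) + 2. -/

import Mathlib

open Matrix
open Submodule


private lemma exists_dual_vec {F : Type*} [Field F] {n : ℕ}
    {W : Submodule F (Fin n → F)} {x : Fin n → F} (hx : x ∉ W) :
    ∃ u : Fin n → F, (∀ r ∈ W, r ⬝ᵥ u = 0) ∧ x ⬝ᵥ u = 1 := by
  have hq : W.mkQ x ≠ 0 := by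
    simpa [Submodule.Quotient.mk_eq_zero] using hx
  set f : F →ₗ[F] ((Fin n → F) ⧸ W) := LinearMap.toSpanSingleton F _ (W.mkQ x) with hf
  have hker : LinearMap.ker f = ⊥ := LinearMap.ker_toSpanSingleton F hq
  obtain ⟨g, hg⟩ := f.exists_leftInverse_of_injective hker
  set φ : (Fin n → F) →ₗ[F] F := g.comp W.mkQ with hφ
  have hrep : ∀ c : Fin n → F, c ⬝ᵥ (fun j => φ (Pi.single j 1)) = φ c := by
    intro c
    have : c = ∑ j, c j • (Pi.single j (1 : F) : Fin n → F) := by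
      funext i
      simp [Pi.single_apply, Finset.sum_ite_eq' Finset.univ i]
    have h2 : φ c = ∑ j, c j * φ ((Pi.single j (1:F) : Fin n → F)) := by
      conv_lhs => rw [this]
      rw [map_sum]
      refine Finset.sum_congr rfl fun j _ => ?_
      rw [_root_.map_smul, smul_eq_mul]
    rw [h2]
    rfl
  refine ⟨fun j => φ (Pi.single j 1), ?_, ?_⟩
  · intro r hr
    rw [hrep]
    have : W.mkQ r = 0 := by simpa [Submodule.Quotient.mk_eq_zero] using hr
    simp [hφ, this]
  · rw [hrep]
    have : φ x = g (f 1) := by simp [hφ, hf, LinearMap.toSpanSingleton_apply_one]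
    rw [this, ← LinearMap.comp_apply, hg]; rfl

private lemma finrank_sup_disjoint {F V : Type*} [Field F] [AddCommGroup V] [Module F V]
    [FiniteDimensional F V] (s t : Submodule F V) (h : Disjoint s t) :
    Module.finrank F ↥(s ⊔ t) = Module.finrank F s + Module.finrank F t := by
  have h2 := Submodule.finrank_sup_add_finrank_inf_eq s t
  rw [h.eq_bot] at h2
  simpa using h2


section Aux
variable (F : Type*) [Field F] (m k : ℕ)

private def embM : (Fin m → F) →ₗ[F] ((Fin 1 ⊕ (Fin m ⊕ Fin k)) → F) where
  toFun c := Sum.elim 0 (Sum.elim c 0)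
  map_add' a b := by funext i; rcases i with i | i | i <;> simp
  map_smul' r a := by funext i; rcases i with i | i | i <;> simp

private def embK : (Fin k → F) →ₗ[F] ((Fin 1 ⊕ (Fin m ⊕ Fin k)) → F) where
  toFun d := Sum.elim 0 (Sum.elim 0 d)
  map_add' a b := by funext i; rcases i with i | i | i <;> simp
  map_smul' r a := by funext i; rcases i with i | i | i <;> simp

@[simp] private lemma embM_apply (c : Fin m → F) (i) :
    embM F m k c i = Sum.elim (0 : Fin 1 → F) (Sum.elim c (0 : Fin k → F)) i := rfl
@[simp] private lemma embK_apply (d : Fin k → F) (i) :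
    embK F m k d i = Sum.elim (0 : Fin 1 → F) (Sum.elim (0 : Fin m → F) d) i := rfl

private lemma embM_inj : Function.Injective (embM F m k) := by
  intro a b h
  funext i
  simpa using congrFun h (Sum.inr (Sum.inl i))

private lemma embK_inj : Function.Injective (embK F m k) := by
  intro a b h
  funext i
  simpa using congrFun h (Sum.inr (Sum.inr i))

end Aux

/-- A = [[α, xᵀ, wᵀ],[y, B, 0],[z, 0, C]]. If xᵀ ∉ rowspace(B) and
y ∉ colspace(B) then rank(A) = rank(B) + rank(C) + 2. -/
theorem stmt_7 {F : Type*} [Field F] {m k : ℕ}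
    (B : Matrix (Fin m) (Fin m) F) (C : Matrix (Fin k) (Fin k) F)
    (x y : Fin m → F) (w z : Fin k → F) (α : F)
    (A : Matrix (Fin 1 ⊕ (Fin m ⊕ Fin k)) (Fin 1 ⊕ (Fin m ⊕ Fin k)) F)
    (hA : A = Matrix.fromBlocks (Matrix.of fun _ _ => α)
      (Matrix.of fun _ j => Sum.elim x w j)
      (Matrix.of fun i _ => Sum.elim y z i)
      (Matrix.fromBlocks B 0 0 C))
    (hx : x ∉ Submodule.span F (Set.range B))
    (hy : y ∉ Submodule.span F (Set.range Bᵀ)) :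
    A.rank = B.rank + C.rank + 2 := by
  classical
  -- basic computation of A *ᵥ
  have hmul : ∀ (t : F) (c : Fin m → F) (d : Fin k → F),
      A *ᵥ (Sum.elim (fun _ => t) (Sum.elim c d)) =
        Sum.elim (fun _ => α * t + x ⬝ᵥ c + w ⬝ᵥ d)
          (Sum.elim (t • y + B *ᵥ c) (t • z + C *ᵥ d)) := by
    intro t c d
    subst hA
    funext i
    rcases i with i | i | i <;>
      simp [Matrix.mulVec, dotProduct, Fintype.sum_sum_type, Finset.mul_sum,
        mul_comm, add_assoc]
  obtain ⟨u, hu0, hu1⟩ := exists_dual_vec hx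
  have hBu : B *ᵥ u = 0 := by
    funext i
    exact hu0 (B i) (Submodule.subset_span ⟨i, rfl⟩)
  set e : (Fin 1 ⊕ (Fin m ⊕ Fin k)) → F := Sum.elim (fun _ => 1) 0 with he_def
  set g : (Fin 1 ⊕ (Fin m ⊕ Fin k)) → F := Sum.elim 0 (Sum.elim y z) with hg_def
  set colB := LinearMap.range B.mulVecLin with hcolB
  set colC := LinearMap.range C.mulVecLin with hcolC
  set S1 : Submodule F _ := Submodule.span F {e} with hS1
  set S2 : Submodule F _ := Submodule.span F {g} with hS2
  set SB := colB.map (embM F m k) with hSB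
  set SC := colC.map (embK F m k) with hSC
  have hyB : y ∉ colB := by rwa [hcolB, Matrix.range_mulVecLin]
  -- membership computations
  have hee : A.mulVecLin (Sum.elim (fun _ => 0) (Sum.elim u 0)) = e := by
    rw [Matrix.mulVecLin_apply, hmul 0 u 0]
    funext i
    rcases i with i | i | i <;> simp [he_def, hu1, hBu]
  have heR : e ∈ LinearMap.range A.mulVecLin := ⟨_, hee⟩
  have hge : A.mulVecLin (Sum.elim (fun _ => 1) (Sum.elim 0 0)) = α • e + g := by
    rw [Matrix.mulVecLin_apply, hmul 1 0 0]
    funext i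
    rcases i with i | i | i <;> simp [he_def, hg_def]
  have hgR : g ∈ LinearMap.range A.mulVecLin := by
    have : g = A.mulVecLin (Sum.elim (fun _ => 1) (Sum.elim 0 0)) - α • e := by
      rw [hge]; abel
    rw [this]
    exact sub_mem (LinearMap.mem_range_self _ _) (Submodule.smul_mem _ _ heR)
  have hbR : ∀ c : Fin m → F, embM F m k (B *ᵥ c) ∈ LinearMap.range A.mulVecLin := by
    intro c
    have h1 : A.mulVecLin (Sum.elim (fun _ => 0) (Sum.elim c 0)) =
        (x ⬝ᵥ c) • e + embM F m k (B *ᵥ c) := by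
      rw [Matrix.mulVecLin_apply, hmul 0 c 0]
      funext i
      rcases i with i | i | i <;> simp [he_def]
    have : embM F m k (B *ᵥ c) =
        A.mulVecLin (Sum.elim (fun _ => 0) (Sum.elim c 0)) - (x ⬝ᵥ c) • e := by
      rw [h1]; abel
    rw [this]
    exact sub_mem (LinearMap.mem_range_self _ _) (Submodule.smul_mem _ _ heR)
  have hdR : ∀ d : Fin k → F, embK F m k (C *ᵥ d) ∈ LinearMap.range A.mulVecLin := by
    intro d
    have h1 : A.mulVecLin (Sum.elim (fun _ => 0) (Sum.elim 0 d)) =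
        (w ⬝ᵥ d) • e + embK F m k (C *ᵥ d) := by
      rw [Matrix.mulVecLin_apply, hmul 0 0 d]
      funext i
      rcases i with i | i | i <;> simp [he_def]
    have : embK F m k (C *ᵥ d) =
        A.mulVecLin (Sum.elim (fun _ => 0) (Sum.elim 0 d)) - (w ⬝ᵥ d) • e := by
      rw [h1]; abel
    rw [this]
    exact sub_mem (LinearMap.mem_range_self _ _) (Submodule.smul_mem _ _ heR)
  -- the range equality
  have key : LinearMap.range A.mulVecLin = S1 ⊔ (S2 ⊔ (SB ⊔ SC)) := by
    apply le_antisymm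
    · rintro _ ⟨v, rfl⟩
      have hv : v = Sum.elim (fun _ : Fin 1 => v (Sum.inl 0))
          (Sum.elim (fun i => v (Sum.inr (Sum.inl i))) (fun j => v (Sum.inr (Sum.inr j)))) := by
        funext i
        rcases i with i | i | i
        · rw [Subsingleton.elim i 0]; rfl
        · rfl
        · rfl
      set t := v (Sum.inl 0)
      set c : Fin m → F := fun i => v (Sum.inr (Sum.inl i))
      set d : Fin k → F := fun j => v (Sum.inr (Sum.inr j))
      have : A.mulVecLin v = (α * t + x ⬝ᵥ c + w ⬝ᵥ d) • e + (t • g +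
          (embM F m k (B *ᵥ c) + embK F m k (C *ᵥ d))) := by
        rw [Matrix.mulVecLin_apply, hv, hmul t c d]
        funext i
        rcases i with i | i | i <;> simp [he_def, hg_def, mul_comm]
      rw [this]
      refine add_mem (Submodule.mem_sup_left ?_) (Submodule.mem_sup_right (add_mem
        (Submodule.mem_sup_left ?_) (Submodule.mem_sup_right (add_mem
        (Submodule.mem_sup_left ?_) (Submodule.mem_sup_right ?_)))))
      · exact Submodule.smul_mem _ _ (Submodule.mem_span_singleton_self e)
      · exact Submodule.smul_mem _ _ (Submodule.mem_span_singleton_self g)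
      · exact ⟨B *ᵥ c, LinearMap.mem_range_self _ _, rfl⟩
      · exact ⟨C *ᵥ d, LinearMap.mem_range_self _ _, rfl⟩
    · refine sup_le ?_ (sup_le ?_ (sup_le ?_ ?_))
      · rw [hS1, Submodule.span_le, Set.singleton_subset_iff]; exact heR
      · rw [hS2, Submodule.span_le, Set.singleton_subset_iff]; exact hgR
      · rintro _ ⟨b, ⟨cc, rfl⟩, rfl⟩
        exact hbR cc
      · rintro _ ⟨b, ⟨dd, rfl⟩, rfl⟩
        exact hdR dd
  -- projection to the middle block
  set pm : ((Fin 1 ⊕ (Fin m ⊕ Fin k)) → F) →ₗ[F] (Fin m → F) :=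
    LinearMap.funLeft F F (fun i : Fin m => Sum.inr (Sum.inl i)) with hpm
  have hpm_embM : ∀ b, pm (embM F m k b) = b := fun b => rfl
  have hpm_embK : ∀ d : Fin k → F, pm (embK F m k d) = 0 := fun d => rfl
  have hpm_g : pm g = y := rfl
  have he_ne : e ≠ 0 := fun h => one_ne_zero (α := F) (by simpa [he_def] using congrFun h (Sum.inl 0))
  have hg_ne : g ≠ 0 := by
    intro h
    apply hyB
    have : y = 0 := by
      funext i
      simpa [hg_def] using congrFun h (Sum.inr (Sum.inl i))
    rw [this]
    exact zero_mem _
  have hdisj3 : Disjoint SB SC := by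
    rw [Submodule.disjoint_def]
    rintro a ⟨b, hb, rfl⟩ ⟨d, hd, heq⟩
    have hb0 : b = 0 := by
      have h2 := congrArg pm heq.symm
      rwa [hpm_embM, hpm_embK] at h2
    rw [hb0, map_zero]
  have hdisj2 : Disjoint S2 (SB ⊔ SC) := by
    rw [Submodule.disjoint_def]
    intro a ha2 haU
    rw [hS2, Submodule.mem_span_singleton] at ha2
    obtain ⟨r, rfl⟩ := ha2
    rw [Submodule.mem_sup] at haU
    obtain ⟨p, hp, q, hq, hpq⟩ := haU
    obtain ⟨b, hbB, rfl⟩ := hp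
    obtain ⟨d, hdC, rfl⟩ := hq
    have hmid : r • y = b := by
      have h2 := congrArg pm hpq
      rw [map_add, hpm_embM, hpm_embK, add_zero, _root_.map_smul, hpm_g] at h2
      exact h2.symm
    rcases eq_or_ne r 0 with hr | hr
    · rw [hr, zero_smul]
    · exfalso
      apply hyB
      have : y = r⁻¹ • (r • y) := by rw [smul_smul, inv_mul_cancel₀ hr, one_smul]
      rw [this, hmid]
      exact Submodule.smul_mem _ _ hbB
  have hT0 : ∀ a ∈ S2 ⊔ (SB ⊔ SC), a (Sum.inl 0) = 0 := by
    intro a ha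
    rw [Submodule.mem_sup] at ha
    obtain ⟨p, hp, q, hq, rfl⟩ := ha
    rw [hS2, Submodule.mem_span_singleton] at hp
    obtain ⟨r, rfl⟩ := hp
    rw [Submodule.mem_sup] at hq
    obtain ⟨p2, hp2, q2, hq2, rfl⟩ := hq
    obtain ⟨b, hbB, rfl⟩ := hp2
    obtain ⟨d, hdC, rfl⟩ := hq2
    simp [hg_def]
  have hdisj1 : Disjoint S1 (S2 ⊔ (SB ⊔ SC)) := by
    rw [Submodule.disjoint_def]
    intro a ha1 haT
    rw [hS1, Submodule.mem_span_singleton] at ha1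
    obtain ⟨r, rfl⟩ := ha1
    have hr : r = 0 := by simpa [he_def] using hT0 _ haT
    rw [hr, zero_smul]
  -- finrank computations
  have hfin1 : Module.finrank F S1 = 1 := finrank_span_singleton he_ne
  have hfin2 : Module.finrank F S2 = 1 := finrank_span_singleton hg_ne
  have hfinSB : Module.finrank F SB = B.rank :=
    ((colB.equivMapOfInjective _ (embM_inj F m k)).finrank_eq).symm
  have hfinSC : Module.finrank F SC = C.rank :=
    ((colC.equivMapOfInjective _ (embK_inj F m k)).finrank_eq).symm
  have step3 : Module.finrank F ↥(SB ⊔ SC) = B.rank + C.rank := by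
    rw [finrank_sup_disjoint _ _ hdisj3, hfinSB, hfinSC]
  have step2 : Module.finrank F ↥(S2 ⊔ (SB ⊔ SC)) = 1 + (B.rank + C.rank) := by
    rw [finrank_sup_disjoint _ _ hdisj2, hfin2, step3]
  have step1 : Module.finrank F ↥(S1 ⊔ (S2 ⊔ (SB ⊔ SC))) = 1 + (1 + (B.rank + C.rank)) := by
    rw [finrank_sup_disjoint _ _ hdisj1, hfin1, step2]
  have : A.rank = Module.finrank F ↥(S1 ⊔ (S2 ⊔ (SB ⊔ SC))) := by
    rw [show A.rank = Module.finrank F (LinearMap.range A.mulVecLin) from rfl, key]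
  rw [this, step1]
  omega
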